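/- Let m, n be positive integers with m | n, and μ, ν ∈ ℤʳ. If ν ≤ₙ μ then ν ≤ₘ μ, where ≤ₙ denotes the metaplectic Bruhat-type partial order on ℤʳ of degree n. -/

import Mathlib

/-- The affine reflection s_{α̂} for α̂ = n(ε_a − ε_b) + sn²δ: s_{α̂} v = s_α v − snα. -/
def reflAff (r : ℕ) (n : ℤ) (a b : Fin (r + 2)) (s : ℤ) (v : Fin (r + 2) → ℤ) :
    Fin (r + 2) → ℤ :=
  fun j => (v ∘ Equiv.swap a b) j - s * n * (if j = a then 1 else if j = b then -1 else 0)

/-- One covering step of the metaplectic order of degree n: ν is obtained from μ by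
reflecting in a positive affine root α̂ = n(ε_a − ε_b) + sn²δ with ⟨α̂, μ⟩ < 0. -/
def stepRel (r n : ℕ) (ν μ : Fin (r + 2) → ℤ) : Prop :=
  ∃ (a b : Fin (r + 2)) (s : ℤ), a ≠ b ∧ ((s = 0 ∧ a < b) ∨ 0 < s) ∧
    (n : ℤ) * (μ a - μ b) + s * (n : ℤ) ^ 2 < 0 ∧ ν = reflAff r n a b s μ

/-- The metaplectic Bruhat-type partial order ≤ₙ on ℤʳ, as the reflexive-transitive
closure of the covering steps. -/
def leN (r n : ℕ) (ν μ : Fin (r + 2) → ℤ) : Prop :=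
  Relation.ReflTransGen (stepRel r n) ν μ

/-- if m ∣ n and ν ≤ₙ μ, then ν ≤ₘ μ. -/
theorem stmt11 (r m n : ℕ) (hm : 0 < m) (hn : 0 < n) (hdvd : m ∣ n)
    (ν μ : Fin (r + 2) → ℤ) (h : leN r n ν μ) : leN r m ν μ := by
  obtain ⟨k, hk⟩ := hdvd
  have hk0 : k ≠ 0 := by rintro rfl; omega
  have hkpos : 0 < k := Nat.pos_of_ne_zero hk0
  refine Relation.ReflTransGen.mono (fun ν μ hst => ?_) _ _ h
  obtain ⟨a, b, s, hab, hside, hlt, hrefl⟩ := hst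
  refine ⟨a, b, s * k, hab, ?_, ?_, ?_⟩
  · rcases hside with ⟨hs0, hlt'⟩ | hs
    · exact Or.inl ⟨by simp [hs0], hlt'⟩
    · exact Or.inr (by positivity)
  · have hcast : (n : ℤ) = (m : ℤ) * (k : ℤ) := by exact_mod_cast hk
    have hkZ : (0:ℤ) < (k:ℤ) := by exact_mod_cast hkpos
    rw [hcast] at hlt
    nlinarith [hlt, hkZ]
  · rw [hrefl]
    funext j
    have hcast : (n : ℤ) = (m : ℤ) * (k : ℤ) := by exact_mod_cast hk
    simp only [reflAff, hcast]
    ring_nf
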